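/- If τ is a permutation such that P(τ) contains no 132-chain, then P(τ) has a linear extension that avoids the pattern 132. -/

import Mathlib

/-- A permutation of length `n` (a bijection of `{0, …, n-1}`, identified with the
sequence of its values), packaged with its length. -/
abbrev PermSig : Type := Σ n : ℕ, Equiv.Perm (Fin n)

/-- Pattern containment: the permutation `α` of length `k` is contained in the
permutation `τ` of length `n` if there is an increasing choice of positions on which
`τ` is order-isomorphic to `α`. -/
def Contains {k n : ℕ} (α : Equiv.Perm (Fin k)) (τ : Equiv.Perm (Fin n)) : Prop :=
  ∃ f : Fin k ↪o Fin n, ∀ i j : Fin k, α i < α j ↔ τ (f i) < τ (f j)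

/-- The avoidance class `Av B`: all permutations containing no member of `B`. -/
def Av (B : Set PermSig) : Set PermSig :=
  {τ : PermSig | ∀ β ∈ B, ¬ Contains β.2 τ.2}

/-- A pattern class: a set of permutations downward closed under pattern containment. -/
def IsPatternClass (C : Set PermSig) : Prop :=
  ∀ (k n : ℕ) (α : Equiv.Perm (Fin k)) (τ : Equiv.Perm (Fin n)),
    Contains α τ → (⟨n, τ⟩ : PermSig) ∈ C → (⟨k, α⟩ : PermSig) ∈ C

/-- The base relation of the poset `P(τ)` on values: `x ≺ y` whenever `x` appears
before `y` in `τ` and either `x > y`, or some value `z` appears between `x` and `y`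
in `τ` with `x < y < z`. -/
def PQBase {n : ℕ} (τ : Equiv.Perm (Fin n)) (x y : Fin n) : Prop :=
  τ.symm x < τ.symm y ∧
    (y < x ∨ ∃ z : Fin n, τ.symm x < τ.symm z ∧ τ.symm z < τ.symm y ∧ x < y ∧ y < z)

/-- The poset `P(τ)`: the transitive closure of the base relation. -/
def PQ {n : ℕ} (τ : Equiv.Perm (Fin n)) : Fin n → Fin n → Prop :=
  Relation.TransGen (PQBase τ)

/-- `σ` is a linear extension of `P(τ)`; equivalently, `(σ, τ)` is an allowable pair,
i.e. a priority queue can produce output `τ` from input `σ`. -/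
def Allowable {n : ℕ} (σ τ : Equiv.Perm (Fin n)) : Prop :=
  ∀ x y : Fin n, PQ τ x y → σ.symm x < σ.symm y

/-- `C𝒜`: the set of permutations obtainable by a priority queue from an input in `C`. -/
def ImageA (C : Set PermSig) : Set PermSig :=
  {τ : PermSig | ∃ σ : Equiv.Perm (Fin τ.1), (⟨τ.1, σ⟩ : PermSig) ∈ C ∧ Allowable σ τ.2}

/-- `P(τ)` has an `α`-chain: values `a 0 ≺ a 1 ≺ … ≺ a (k-1)` forming a chain of
`P(τ)` whose pattern is `α`. -/
def HasChain {k n : ℕ} (α : Equiv.Perm (Fin k)) (τ : Equiv.Perm (Fin n)) : Prop :=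
  ∃ a : Fin k → Fin n,
    (∀ i j : Fin k, i < j → PQ τ (a i) (a j)) ∧
    (∀ i j : Fin k, a i < a j ↔ α i < α j)

/-- The pattern `132` (written 0-indexed). -/
noncomputable def p132 : Equiv.Perm (Fin 3) :=
  Equiv.ofBijective (![0, 2, 1] : Fin 3 → Fin 3) (by decide)

open Relation in
lemma pq_pos {n : ℕ} (τ : Equiv.Perm (Fin n)) {x y : Fin n} (h : PQ τ x y) :
    τ.symm x < τ.symm y := by
  induction h with
  | single hb => exact hb.1
  | tail _ hb ih => exact lt_trans ih hb.1

lemma pq_irrefl {n : ℕ} (τ : Equiv.Perm (Fin n)) (x : Fin n) : ¬ PQ τ x x :=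
  fun h => lt_irrefl _ (pq_pos τ h)

lemma pq_inv {n : ℕ} (τ : Equiv.Perm (Fin n)) {x y : Fin n}
    (h1 : τ.symm x < τ.symm y) (h2 : y < x) : PQ τ x y :=
  Relation.TransGen.single ⟨h1, Or.inl h2⟩

lemma p132_eval : p132 0 = 0 ∧ p132 1 = 2 ∧ p132 2 = 1 := by
  refine ⟨?_, ?_, ?_⟩ <;> simp [p132]

lemma no_chain {n : ℕ} (τ : Equiv.Perm (Fin n)) (h : ¬ HasChain p132 τ) :
    ∀ a b c : Fin n, PQ τ a b → PQ τ b c → a < c → c < b → False := by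
  intro a b c h1 h2 h3 h4
  apply h
  refine ⟨![a, b, c], ?_, ?_⟩
  · intro i j hij
    fin_cases i <;> fin_cases j <;>
      simp only [Matrix.cons_val_zero, Matrix.cons_val_one, Matrix.head_cons,
        Matrix.cons_val_two, Matrix.tail_cons] <;>
      first
        | exact absurd hij (by decide)
        | exact h1
        | exact h2
        | exact Relation.TransGen.trans h1 h2
  · have hab : a < b := lt_trans h3 h4
    intro i j
    fin_cases i <;> fin_cases j <;>
      simp [p132, lt_irrefl, hab, h3, h4, le_of_lt, not_lt.2 (le_of_lt hab),
        not_lt.2 (le_of_lt h3), not_lt.2 (le_of_lt h4)]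

def Rule {n : ℕ} (t : ℕ) : List (Fin n) → Prop
  | [] => True
  | c :: l => ((c : ℕ) < t ∨ ∀ x ∈ l, t < (x : ℕ) → (c : ℕ) < (x : ℕ)) ∧
      Rule (min t (c : ℕ)) l

lemma ruleNoDesc {n : ℕ} : ∀ (l : List (Fin n)) (t : ℕ), Rule t l →
    ∀ (i j : ℕ) (hi : i < l.length) (hj : j < l.length), i < j →
      t < (l.get ⟨j, hj⟩ : ℕ) → (l.get ⟨j, hj⟩ : ℕ) < (l.get ⟨i, hi⟩ : ℕ) → False := by
  intro l
  induction l with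
  | nil => intro t _ i j hi; simp at hi
  | cons c l ih =>
    intro t hr i j hi hj hij h1 h2
    match j, hj with
    | j + 1, hj =>
      have hj' : j < l.length := Nat.lt_of_succ_lt_succ hj
      match i, hi with
      | 0, _ =>
        rcases hr.1 with hcase | hcase
        · exact absurd (lt_trans hcase h1) (not_lt.2 (le_of_lt h2))
        · exact absurd (hcase _ (l.get_mem _) h1) (not_lt.2 (le_of_lt h2))
      | i + 1, hi =>
        exact ih (min t (c : ℕ)) hr.2 i j (Nat.lt_of_succ_lt_succ hi) hj'
          (Nat.lt_of_succ_lt_succ hij) (lt_of_le_of_lt (min_le_left _ _) h1) h2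

lemma ruleAvoid {n : ℕ} : ∀ (l : List (Fin n)) (t : ℕ), Rule t l →
    ∀ (i j k : ℕ) (hi : i < l.length) (hj : j < l.length) (hk : k < l.length),
      i < j → j < k → (l.get ⟨i, hi⟩ : ℕ) < (l.get ⟨k, hk⟩ : ℕ) →
      (l.get ⟨k, hk⟩ : ℕ) < (l.get ⟨j, hj⟩ : ℕ) → False := by
  intro l
  induction l with
  | nil => intro t _ i j k hi; simp at hi
  | cons c l ih =>
    intro t hr i j k hi hj hk hij hjk h1 h2
    match k, hk with
    | k + 1, hk =>
      have hk' : k < l.length := Nat.lt_of_succ_lt_succ hk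
      match j, hjk, hj with
      | j + 1, hjk, hj =>
        have hj' : j < l.length := Nat.lt_of_succ_lt_succ hj
        match i, hi with
        | 0, _ =>
          exact ruleNoDesc l (min t (c : ℕ)) hr.2 j k hj' hk'
            (Nat.lt_of_succ_lt_succ hjk)
            (lt_of_le_of_lt (min_le_right _ _) h1) h2
        | i + 1, hi =>
          exact ih (min t (c : ℕ)) hr.2 i j k (Nat.lt_of_succ_lt_succ hi) hj' hk'
            (Nat.lt_of_succ_lt_succ hij) (Nat.lt_of_succ_lt_succ hjk) h1 h2

lemma build {n : ℕ} (τ : Equiv.Perm (Fin n))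
    (hN : ∀ a b c : Fin n, PQ τ a b → PQ τ b c → a < c → c < b → False) :
    ∀ (k : ℕ) (S : Finset (Fin n)) (t : ℕ), S.card ≤ k →
      (∀ x ∈ S, ∀ y, PQ τ x y → y ∈ S) →
      (∀ x ∈ S, (x : ℕ) ≠ t) →
      (∀ w ∈ S, ∀ u ∈ S, PQ τ w u → t < (u : ℕ) → (u : ℕ) < (w : ℕ) → False) →
      ∃ l : List (Fin n), l.Nodup ∧ l.toFinset = S ∧
        l.Pairwise (fun a b => ¬ PQ τ b a) ∧ Rule t l := by
  classical
  intro k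
  induction k with
  | zero =>
    intro S t hc _ _ _
    have hS : S = ∅ := Finset.card_eq_zero.mp (Nat.le_zero.mp hc)
    exact ⟨[], List.nodup_nil, by simp [hS], List.Pairwise.nil, trivial⟩
  | succ k ih =>
    intro S t hc hUp hT2 hP1
    rcases S.eq_empty_or_nonempty with hS | hS
    · exact ⟨[], List.nodup_nil, by simp [hS], List.Pairwise.nil, trivial⟩
    have argmin : ∀ D : Finset (Fin n), D.Nonempty →
        ∃ v ∈ D, ∀ y ∈ D, τ.symm v ≤ τ.symm y :=
      fun D hD => Finset.exists_min_image D (fun x => τ.symm x) hD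
    -- the set of minimal elements of S below t
    set B : Finset (Fin n) :=
      S.filter (fun a => (a : ℕ) < t ∧ ∀ y ∈ S, ¬ PQ τ y a) with hBdef
    -- generic facts about a chosen c = max' B
    have maxB : ∀ (hB : B.Nonempty), ∃ c ∈ S, ((c : ℕ) < t ∧ ∀ y ∈ S, ¬ PQ τ y c) ∧
        (∀ b ∈ B, (b : ℕ) ≤ (c : ℕ)) := by
      intro hB
      refine ⟨B.max' hB, (Finset.mem_filter.mp (B.max'_mem hB)).1,
        (Finset.mem_filter.mp (B.max'_mem hB)).2, fun b hb => Fin.le_def.mp (B.le_max' b hb)⟩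
    -- key choice of c
    have key : ∃ c ∈ S, (∀ y ∈ S, ¬ PQ τ y c) ∧
        ((c : ℕ) < t ∨ ∀ x ∈ S, x ≠ c → t < (x : ℕ) → (c : ℕ) < (x : ℕ)) ∧
        (∀ w ∈ S, ∀ u ∈ S, PQ τ w u →
          min t (c : ℕ) < (u : ℕ) → (u : ℕ) < (w : ℕ) → False) := by
      by_cases hA : (S.filter (fun x : Fin n => t < (x : ℕ))).Nonempty
      · set e := (S.filter (fun x : Fin n => t < (x : ℕ))).min' hA with hedef
        have heM := Finset.min'_mem _ hA
        have heS : e ∈ S := (Finset.mem_filter.mp heM).1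
        have het : t < (e : ℕ) := (Finset.mem_filter.mp heM).2
        have hemle : ∀ x ∈ S, t < (x : ℕ) → (e : ℕ) ≤ (x : ℕ) := fun x hx hxt =>
          Fin.le_def.mp (Finset.min'_le _ x (Finset.mem_filter.mpr ⟨hx, hxt⟩))
        by_cases hemin : ∀ y ∈ S, ¬ PQ τ y e
        · refine ⟨e, heS, hemin, Or.inr ?_, ?_⟩
          · intro x hx hxe hxt
            exact lt_of_le_of_ne (hemle x hx hxt)
              (fun hh => hxe (Fin.val_injective hh.symm))
          · have hmin : min t (e : ℕ) = t := min_eq_left (le_of_lt het)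
            rw [hmin]
            exact hP1
        · -- e is not minimal in S
          push_neg at hemin
          obtain ⟨v0, hv0S, hv0e⟩ := hemin
          obtain ⟨v, hvD, hvmin⟩ := argmin (S.filter fun a => PQ τ a e)
            ⟨v0, Finset.mem_filter.mpr ⟨hv0S, hv0e⟩⟩
          have hvS : v ∈ S := (Finset.mem_filter.mp hvD).1
          have hve : PQ τ v e := (Finset.mem_filter.mp hvD).2
          have hvminS : ∀ y ∈ S, ¬ PQ τ y v := by
            intro y hy hyv
            exact absurd (pq_pos τ hyv)
              (not_lt.2 (hvmin y (Finset.mem_filter.mpr ⟨hy, hyv.trans hve⟩)))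
          have hvlte : (v : ℕ) < (e : ℕ) := by
            rcases lt_trichotomy ((v : ℕ)) ((e : ℕ)) with h | h | h
            · exact h
            · exact absurd (Fin.val_injective h ▸ hve) (pq_irrefl τ e)
            · exact absurd (hP1 v hvS e heS hve het h) id
          have hvt : (v : ℕ) < t := by
            rcases lt_trichotomy ((v : ℕ)) t with h | h | h
            · exact h
            · exact absurd h (hT2 v hvS)
            · exact absurd (hemle v hvS h) (not_le.2 hvlte)
          have hvB : v ∈ B := Finset.mem_filter.mpr ⟨hvS, hvt, hvminS⟩
          obtain ⟨c, hcS, ⟨hct, hcmin⟩, hcmax⟩ := maxB ⟨v, hvB⟩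
          refine ⟨c, hcS, hcmin, Or.inl hct, ?_⟩
          have hmin : min t (c : ℕ) = (c : ℕ) := min_eq_right (le_of_lt hct)
          rw [hmin]
          intro w' hw' u hu hwu h1 h2
          -- u < t
          have hut : (u : ℕ) < t := by
            rcases lt_trichotomy ((u : ℕ)) t with h | h | h
            · exact h
            · exact absurd h (hT2 u hu)
            · exact (hP1 w' hw' u hu hwu h h2).elim
          -- w0 : minimal element of S weakly below w'
          obtain ⟨w0, hw0D, hw0min⟩ := argmin (S.filter fun a => a = w' ∨ PQ τ a w')
            ⟨w', Finset.mem_filter.mpr ⟨hw', Or.inl rfl⟩⟩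
          have hw0S : w0 ∈ S := (Finset.mem_filter.mp hw0D).1
          have hw0rel := (Finset.mem_filter.mp hw0D).2
          have hw0minS : ∀ y ∈ S, ¬ PQ τ y w0 := by
            intro y hy hyw0
            have hyD : y ∈ S.filter fun a => a = w' ∨ PQ τ a w' := by
              refine Finset.mem_filter.mpr ⟨hy, Or.inr ?_⟩
              rcases hw0rel with rfl | h9
              · exact hyw0
              · exact hyw0.trans h9
            exact absurd (pq_pos τ hyw0) (not_lt.2 (hw0min y hyD))
          have hw0u : PQ τ w0 u := by
            rcases hw0rel with rfl | h9
            · exact hwu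
            · exact h9.trans hwu
          have huw0 : (u : ℕ) < (w0 : ℕ) := by
            rcases hw0rel with rfl | h9
            · exact h2
            · rcases lt_trichotomy ((w0 : ℕ)) ((u : ℕ)) with hlt | heq | hgt
              · exact absurd (hN w0 w' u h9 hwu (Fin.lt_def.mpr hlt)
                  (Fin.lt_def.mpr h2)) id
              · exact absurd (Fin.val_injective heq ▸ hw0u) (pq_irrefl τ u)
              · exact hgt
          by_cases hw0t : (w0 : ℕ) < t
          · have hw0B : w0 ∈ B := Finset.mem_filter.mpr ⟨hw0S, hw0t, hw0minS⟩
            have := hcmax w0 hw0B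
            omega
          · have htw0 : t < (w0 : ℕ) :=
              lt_of_le_of_ne (not_lt.mp hw0t) (Ne.symm (hT2 w0 hw0S))
            have hew0 : (e : ℕ) ≤ (w0 : ℕ) := hemle w0 hw0S htw0
            have hnew0 : e ≠ w0 := fun hh => hw0minS v0 hv0S (hh ▸ hv0e)
            have hew0' : (e : ℕ) < (w0 : ℕ) :=
              lt_of_le_of_ne hew0 (fun hh => hnew0 (Fin.val_injective hh))
            have hvc : (v : ℕ) ≤ (c : ℕ) := hcmax v hvB
            have hvu : (v : ℕ) < (u : ℕ) := by omega
            have hposne : τ.symm u ≠ τ.symm e := by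
              intro hh
              have h9 : u = e := τ.symm.injective hh
              rw [h9] at hut
              omega
            rcases lt_or_gt_of_ne hposne with hpos | hpos
            · -- pos u < pos e : then pos w0 < pos e, w0 ≻ e inversion : P1 violated
              have hpw0u : τ.symm w0 < τ.symm u := pq_pos τ hw0u
              have : PQ τ w0 e := pq_inv τ (lt_trans hpw0u hpos) (Fin.lt_def.mpr hew0')
              exact hP1 w0 hw0S e heS this het hew0'
            · -- pos e < pos u : e ≻ u inversion, chain v ≺ e ≺ u is a 132-chain
              have heu : PQ τ e u := pq_inv τ hpos (Fin.lt_def.mpr (by omega))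
              exact hN v e u hve heu (Fin.lt_def.mpr hvu) (Fin.lt_def.mpr (by omega))
      · -- no element of S above t
        have hall : ∀ x ∈ S, (x : ℕ) < t := by
          intro x hx
          rcases lt_trichotomy ((x : ℕ)) t with h | h | h
          · exact h
          · exact absurd h (hT2 x hx)
          · exact absurd ⟨x, Finset.mem_filter.mpr ⟨hx, h⟩⟩ hA
        obtain ⟨m, hmS, hmmin⟩ := argmin S hS
        have hmminS : ∀ y ∈ S, ¬ PQ τ y m := fun y hy hym =>
          absurd (pq_pos τ hym) (not_lt.2 (hmmin y hy))
        have hmB : m ∈ B := Finset.mem_filter.mpr ⟨hmS, hall m hmS, hmminS⟩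
        obtain ⟨c, hcS, ⟨hct, hcmin⟩, hcmax⟩ := maxB ⟨m, hmB⟩
        refine ⟨c, hcS, hcmin, Or.inl hct, ?_⟩
        have hmin : min t (c : ℕ) = (c : ℕ) := min_eq_right (le_of_lt hct)
        rw [hmin]
        intro w' hw' u hu hwu h1 h2
        obtain ⟨w0, hw0D, hw0min⟩ := argmin (S.filter fun a => a = w' ∨ PQ τ a w')
          ⟨w', Finset.mem_filter.mpr ⟨hw', Or.inl rfl⟩⟩
        have hw0S : w0 ∈ S := (Finset.mem_filter.mp hw0D).1
        have hw0rel := (Finset.mem_filter.mp hw0D).2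
        have hw0minS : ∀ y ∈ S, ¬ PQ τ y w0 := by
          intro y hy hyw0
          have hyD : y ∈ S.filter fun a => a = w' ∨ PQ τ a w' := by
            refine Finset.mem_filter.mpr ⟨hy, Or.inr ?_⟩
            rcases hw0rel with rfl | h9
            · exact hyw0
            · exact hyw0.trans h9
          exact absurd (pq_pos τ hyw0) (not_lt.2 (hw0min y hyD))
        have hw0u : PQ τ w0 u := by
          rcases hw0rel with rfl | h9
          · exact hwu
          · exact h9.trans hwu
        have huw0 : (u : ℕ) < (w0 : ℕ) := by
          rcases hw0rel with rfl | h9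
          · exact h2
          · rcases lt_trichotomy ((w0 : ℕ)) ((u : ℕ)) with hlt | heq | hgt
            · exact absurd (hN w0 w' u h9 hwu (Fin.lt_def.mpr hlt)
                (Fin.lt_def.mpr h2)) id
            · exact absurd (Fin.val_injective heq ▸ hw0u) (pq_irrefl τ u)
            · exact hgt
        have hw0B : w0 ∈ B := Finset.mem_filter.mpr ⟨hw0S, hall w0 hw0S, hw0minS⟩
        have := hcmax w0 hw0B
        omega
    obtain ⟨c, hcS, hcmin, hcrule, hcP1⟩ := key
    have hcard' : (S.erase c).card ≤ k := by
      have := Finset.card_erase_of_mem hcS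
      omega
    obtain ⟨l, hnd, htf, hpw, hrule⟩ := ih (S.erase c) (min t (c : ℕ)) hcard'
      (fun x hx y hxy => by
        have hxS : x ∈ S := Finset.mem_of_mem_erase hx
        have hyS : y ∈ S := hUp x hxS y hxy
        refine Finset.mem_erase.mpr ⟨?_, hyS⟩
        rintro rfl
        exact hcmin x hxS hxy)
      (fun x hx => by
        have hxS : x ∈ S := Finset.mem_of_mem_erase hx
        have hxc : x ≠ c := (Finset.mem_erase.mp hx).1
        have h1 : (x : ℕ) ≠ t := hT2 x hxS
        have h2 : (x : ℕ) ≠ (c : ℕ) := fun hh => hxc (Fin.val_injective hh)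
        rcases min_cases t ((c : ℕ)) with ⟨hm, _⟩ | ⟨hm, _⟩ <;> omega)
      (fun w hw u hu hwu h1 h2 =>
        hcP1 w (Finset.mem_of_mem_erase hw) u (Finset.mem_of_mem_erase hu) hwu h1 h2)
    refine ⟨c :: l, ?_, ?_, ?_, ?_⟩
    · refine List.nodup_cons.mpr ⟨fun hcl => ?_, hnd⟩
      have : c ∈ S.erase c := htf ▸ List.mem_toFinset.mpr hcl
      exact (Finset.mem_erase.mp this).1 rfl
    · rw [List.toFinset_cons, htf, Finset.insert_erase hcS]
    · refine List.pairwise_cons.mpr ⟨fun b hb => ?_, hpw⟩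
      have hbS : b ∈ S := Finset.mem_of_mem_erase (htf ▸ List.mem_toFinset.mpr hb)
      exact hcmin b hbS
    · refine ⟨?_, hrule⟩
      rcases hcrule with h | h
      · exact Or.inl h
      · refine Or.inr (fun x hx hxt => ?_)
        have hxE : x ∈ S.erase c := htf ▸ List.mem_toFinset.mpr hx
        exact h x (Finset.mem_of_mem_erase hxE) (Finset.mem_erase.mp hxE).1 hxt


/-- If `P(τ)` contains no `132`-chain then it has a `132`-avoiding linear
extension. -/
theorem no_chain_132_linear_extension {n : ℕ} (τ : Equiv.Perm (Fin n)) (h : ¬ HasChain p132 τ) :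
    ∃ σ : Equiv.Perm (Fin n), Allowable σ τ ∧ ¬ Contains p132 σ := by
  classical
  have hN := no_chain τ h
  obtain ⟨l, hnd, htf, hpw, hrule⟩ := build τ hN n Finset.univ n
    (by simp)
    (fun x _ y _ => Finset.mem_univ y)
    (fun x _ => Nat.ne_of_lt x.isLt)
    (fun w _ u _ _ h1 h2 => absurd h1 (not_lt.2 (le_of_lt u.isLt)))
  have hlen : l.length = n := by
    have h1 : l.toFinset.card = l.length := by
      rw [List.card_toFinset, hnd.dedup]
    rw [htf] at h1
    simpa using h1.symm
  set f : Fin n → Fin n := fun i => l.get (Fin.cast hlen.symm i) with hfdef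
  have hinj : Function.Injective f := by
    intro a b hab
    have h2 : Fin.cast hlen.symm a = Fin.cast hlen.symm b :=
      (List.Nodup.get_inj_iff hnd).mp hab
    have h3 := congrArg Fin.val h2
    exact Fin.ext h3
  have hbij : Function.Bijective f :=
    (Fintype.bijective_iff_injective_and_card f).mpr ⟨hinj, rfl⟩
  set σ : Equiv.Perm (Fin n) := Equiv.ofBijective f hbij with hσdef
  have hσapp : ∀ i, σ i = f i := fun i => rfl
  refine ⟨σ, ?_, ?_⟩
  · intro x y hxy
    have hx : f (σ.symm x) = x := σ.apply_symm_apply x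
    have hy : f (σ.symm y) = y := σ.apply_symm_apply y
    have hpg := List.pairwise_iff_get.mp hpw
    rcases lt_trichotomy (σ.symm x) (σ.symm y) with hlt | heq | hgt
    · exact hlt
    · exfalso
      rw [heq] at hx
      have hxy2 : x = y := hx.symm.trans hy
      rw [hxy2] at hxy
      exact pq_irrefl τ y hxy
    · exfalso
      have h3 := hpg (Fin.cast hlen.symm (σ.symm y)) (Fin.cast hlen.symm (σ.symm x))
        (Fin.lt_def.mpr (Fin.lt_def.mp hgt))
      have hx' : l.get (Fin.cast hlen.symm (σ.symm x)) = x := hx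
      have hy' : l.get (Fin.cast hlen.symm (σ.symm y)) = y := hy
      rw [hx', hy'] at h3
      exact h3 hxy
  · rintro ⟨f3, hf3⟩
    have e0 : p132 0 = 0 := p132_eval.1
    have e1 : p132 1 = 2 := p132_eval.2.1
    have e2 : p132 2 = 1 := p132_eval.2.2
    have k01 : σ (f3 0) < σ (f3 1) := (hf3 0 1).mp (by rw [e0, e1]; decide)
    have k02 : σ (f3 0) < σ (f3 2) := (hf3 0 2).mp (by rw [e0, e2]; decide)
    have k21 : σ (f3 2) < σ (f3 1) := (hf3 2 1).mp (by rw [e2, e1]; decide)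
    have m01 : f3 0 < f3 1 := f3.lt_iff_lt.mpr (by decide)
    have m12 : f3 1 < f3 2 := f3.lt_iff_lt.mpr (by decide)
    have hi : ((f3 0 : Fin n) : ℕ) < l.length := by rw [hlen]; exact (f3 0).isLt
    have hj : ((f3 1 : Fin n) : ℕ) < l.length := by rw [hlen]; exact (f3 1).isLt
    have hk : ((f3 2 : Fin n) : ℕ) < l.length := by rw [hlen]; exact (f3 2).isLt
    have hg : ∀ (x : Fin n) (hx : (x : ℕ) < l.length), l.get ⟨(x : ℕ), hx⟩ = σ x :=
      fun x hx => rfl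
    exact ruleAvoid l n hrule (f3 0) (f3 1) (f3 2) hi hj hk
      (Fin.lt_def.mp m01) (Fin.lt_def.mp m12)
      (by rw [hg _ hi, hg _ hk]; exact Fin.lt_def.mp k02)
      (by rw [hg _ hk, hg _ hj]; exact Fin.lt_def.mp k21)
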